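/- Let G be a finite simple graph on a vertex set V, and let P be a subset of the edge set of G such that in the subgraph (V, P) every vertex has degree at most 2. Let C be the set of vertices having degree at least 1 in (V, P). Then for every vertex cover C* of G, |C| ≤ 3·|C*|. -/

import Mathlib

/-- If `P` is a subset of the edge set of a finite simple graph `G` such
that in the subgraph `(V, P)` every vertex has degree at most 2, and `C` is the set of
vertices of degree at least 1 in `(V, P)`, then `|C| ≤ 3·|C*|` for every vertex cover
`C*` of `G`. -/
theorem ncard_nonisolated_le_three_mul_cover
    {V : Type*} [Fintype V] (G : SimpleGraph V)
    (P : Set (Sym2 V)) (hPsub : P ⊆ G.edgeSet)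
    (hdeg : ∀ v : V, ({u : V | s(v, u) ∈ P}).ncard ≤ 2)
    (C : Set V)
    (hC : C = {v : V | 1 ≤ ({u : V | s(v, u) ∈ P}).ncard})
    (Cstar : Set V)
    (hCstar : ∀ u v : V, G.Adj u v → u ∈ Cstar ∨ v ∈ Cstar) :
    C.ncard ≤ 3 * Cstar.ncard := by
  classical
  set F := fun w : V => {u : V | s(w, u) ∈ P} with hF
  have hsub : C \ Cstar ⊆ ⋃ w ∈ Cstar, F w := by
    intro v hv
    obtain ⟨hvC, hvn⟩ := hv
    rw [hC] at hvC
    have hne : (F v).Nonempty := by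
      rw [← Set.ncard_pos (Set.toFinite _)]
      exact hvC
    obtain ⟨u, hu⟩ := hne
    have hadj : G.Adj v u := (SimpleGraph.mem_edgeSet G).mp (hPsub hu)
    have huC : u ∈ Cstar := by
      rcases hCstar v u hadj with h | h
      · exact absurd h hvn
      · exact h
    refine Set.mem_biUnion huC ?_
    show s(u, v) ∈ P
    rwa [Sym2.eq_swap]
  have h1 : (C \ Cstar).ncard ≤ 2 * Cstar.ncard := by
    have hco : (⋃ w ∈ Cstar, F w) ⊆
        ↑((Set.toFinite Cstar).toFinset.biUnion fun w => (Set.toFinite (F w)).toFinset) := by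
      intro x hx
      simp only [Set.mem_iUnion, Finset.coe_biUnion, Set.Finite.coe_toFinset,
        Set.mem_iUnion, Finset.mem_coe, Set.Finite.mem_toFinset] at *
      exact hx
    calc (C \ Cstar).ncard
        ≤ ((⋃ w ∈ Cstar, F w) : Set V).ncard :=
          Set.ncard_le_ncard hsub (Set.toFinite _)
      _ ≤ (((Set.toFinite Cstar).toFinset.biUnion fun w =>
            (Set.toFinite (F w)).toFinset : Finset V) : Set V).ncard :=
          Set.ncard_le_ncard hco (Set.toFinite _)
      _ = ((Set.toFinite Cstar).toFinset.biUnion fun w =>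
            (Set.toFinite (F w)).toFinset).card := Set.ncard_coe_finset _
      _ ≤ ∑ w ∈ (Set.toFinite Cstar).toFinset, ((Set.toFinite (F w)).toFinset).card :=
          Finset.card_biUnion_le
      _ ≤ ∑ _w ∈ (Set.toFinite Cstar).toFinset, 2 := by
          refine Finset.sum_le_sum fun w _ => ?_
          rw [Set.Finite.card_toFinset, ← Set.toFinset_card]
          have := hdeg w
          rwa [Set.ncard_eq_toFinset_card'] at this
      _ = 2 * Cstar.ncard := by
          rw [Finset.sum_const, smul_eq_mul, Set.ncard_eq_toFinset_card',
            Set.toFinite_toFinset, mul_comm]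
  have h2 : C.ncard ≤ (C \ Cstar).ncard + Cstar.ncard := by
    calc C.ncard ≤ ((C \ Cstar) ∪ Cstar).ncard :=
          Set.ncard_le_ncard (fun x hx => by
            by_cases h : x ∈ Cstar
            · exact Or.inr h
            · exact Or.inl ⟨hx, h⟩) (Set.toFinite _)
      _ ≤ (C \ Cstar).ncard + Cstar.ncard := Set.ncard_union_le _ _
  omega
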